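/- For real x ≥ 1, ∑_{n ≤ x} d(n) ≤ x·log x + 0.155·x + 4·√x, where d(n) is the number of divisors of n. -/

import Mathlib

open Finset

/- ### Analytic lemmas -/

/-- Padé-type lower bound for the logarithm. -/
private lemma log_ge_pade {y : ℝ} (hy : 1 ≤ y) : 2 - 4 * (y + 1)⁻¹ ≤ Real.log y := by
  set F : ℝ → ℝ := fun t => Real.log t - 2 + 4 * (t + 1)⁻¹ with hF
  have hderiv : ∀ t : ℝ, 1 ≤ t → HasDerivAt F (t⁻¹ + 4 * (-1 / (t + 1) ^ 2)) t := by
    intro t ht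
    have h1 : HasDerivAt Real.log t⁻¹ t := Real.hasDerivAt_log (by linarith)
    have h2 : HasDerivAt (fun s : ℝ => s + 1) 1 t := (hasDerivAt_id t).add_const 1
    have h3 : HasDerivAt (fun s : ℝ => (s + 1)⁻¹) (-1 / (t + 1) ^ 2) t := by
      have := h2.inv (by linarith)
      simpa [Pi.inv_def] using this
    exact (h1.sub_const 2).add (h3.const_mul 4)
  have mono : MonotoneOn F (Set.Ici 1) := by
    apply monotoneOn_of_deriv_nonneg (convex_Ici 1)
    · intro t ht
      have ht' : (1:ℝ) ≤ t := Set.mem_Ici.mp ht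
      exact ((hderiv t ht').continuousAt).continuousWithinAt
    · intro t ht
      rw [interior_Ici] at ht
      have ht' : (1:ℝ) < t := Set.mem_Ioi.mp ht
      exact (hderiv t (le_of_lt ht')).differentiableAt.differentiableWithinAt
    · intro t ht
      rw [interior_Ici] at ht
      have ht' : (1:ℝ) < t := Set.mem_Ioi.mp ht
      rw [(hderiv t (le_of_lt ht')).deriv]
      have h0 : (0:ℝ) < t := by linarith
      have h1 : (0:ℝ) < (t+1)^2 := by positivity
      have he : t⁻¹ + 4 * (-1 / (t + 1) ^ 2) = (t-1)^2 / (t * (t+1)^2) := by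
        field_simp; ring
      rw [he]; positivity
  have h1 : F 1 ≤ F y := mono (by simp) (by simpa using hy) hy
  have h2 : F 1 = 0 := by norm_num [hF]
  rw [h2] at h1
  simp only [hF] at h1
  linarith

/-- Trapezoid-type upper bound for the logarithm. -/
private lemma log_le_trap {y : ℝ} (hy : 1 ≤ y) : Real.log y ≤ (y - y⁻¹) / 2 := by
  set F : ℝ → ℝ := fun t => (t - t⁻¹) / 2 - Real.log t with hF
  have hderiv : ∀ t : ℝ, 1 ≤ t → HasDerivAt F ((1 - (-1 / t ^ 2)) / 2 - t⁻¹) t := by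
    intro t ht
    have h1 : HasDerivAt Real.log t⁻¹ t := Real.hasDerivAt_log (by linarith)
    have h2 : HasDerivAt (fun s : ℝ => s⁻¹) (-1 / t ^ 2) t := by
      have := (hasDerivAt_id t).inv (by simp only [id_eq]; exact ne_of_gt (by linarith))
      simpa [Pi.inv_def] using this
    exact (((hasDerivAt_id t).sub h2).div_const 2).sub h1
  have mono : MonotoneOn F (Set.Ici 1) := by
    apply monotoneOn_of_deriv_nonneg (convex_Ici 1)
    · intro t ht
      have ht' : (1:ℝ) ≤ t := Set.mem_Ici.mp ht
      exact ((hderiv t ht').continuousAt).continuousWithinAt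
    · intro t ht
      rw [interior_Ici] at ht
      have ht' : (1:ℝ) < t := Set.mem_Ioi.mp ht
      exact (hderiv t (le_of_lt ht')).differentiableAt.differentiableWithinAt
    · intro t ht
      rw [interior_Ici] at ht
      have ht' : (1:ℝ) < t := Set.mem_Ioi.mp ht
      rw [(hderiv t (le_of_lt ht')).deriv]
      have h0 : (0:ℝ) < t := by linarith
      have he : (1 - (-1 / t ^ 2)) / 2 - t⁻¹ = (t-1)^2 / (2 * t^2) := by
        field_simp; ring
      rw [he]; positivity
  have h1 : F 1 ≤ F y := mono (by simp) (by simpa using hy) hy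
  have h2 : F 1 = 0 := by norm_num [hF]
  rw [h2] at h1
  simp only [hF] at h1
  linarith

/-- Midpoint inequality: `1/k ≤ log(2k+1) - log(2k-1)`. -/
private lemma midpoint_ineq {k : ℕ} (hk : 1 ≤ k) :
    ((k : ℝ))⁻¹ ≤ Real.log (2 * k + 1) - Real.log (2 * k - 1) := by
  have hk1 : (1:ℝ) ≤ (k:ℝ) := by exact_mod_cast hk
  have hpos : (0:ℝ) < 2 * k - 1 := by linarith
  have hy : (1:ℝ) ≤ (2 * k + 1) / (2 * k - 1) := by
    rw [le_div_iff₀ hpos]; linarith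
  have h := log_ge_pade hy
  rw [Real.log_div (by linarith) (by linarith)] at h
  have he : 2 - 4 * ((2 * (k:ℝ) + 1) / (2 * k - 1) + 1)⁻¹ = (k:ℝ)⁻¹ := by
    have h4 : (2 * (k:ℝ) + 1) / (2 * k - 1) + 1 = 4 * k / (2 * k - 1) := by
      field_simp; ring
    rw [h4, inv_div]
    have hk0 : (k:ℝ) ≠ 0 := ne_of_gt (by linarith)
    field_simp
    ring
  rw [he] at h
  exact h

/-- The harmonic sum. -/
private noncomputable def H (n : ℕ) : ℝ := ∑ a ∈ Icc 1 n, (a : ℝ)⁻¹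

private lemma H_succ (n : ℕ) : H (n + 1) = H n + ((n:ℝ) + 1)⁻¹ := by
  rw [H, H, Finset.sum_Icc_succ_top (by omega)]
  push_cast; ring_nf

/-- `H n - log (2n+1)` is antitone. -/
private lemma g_antitone {m n : ℕ} (hm : 1 ≤ m) (hmn : m ≤ n) :
    H n - Real.log (2 * n + 1) ≤ H m - Real.log (2 * m + 1) := by
  induction n, hmn using Nat.le_induction with
  | base => exact le_refl _
  | succ n hn ih =>
    refine le_trans ?_ ih
    have h := midpoint_ineq (k := n + 1) (by omega)
    rw [H_succ]
    push_cast at h ⊢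
    have e1 : 2 * ((n:ℝ) + 1) - 1 = 2 * n + 1 := by ring
    have e2 : 2 * ((n:ℝ) + 1) + 1 = 2 * (n + 1) + 1 := by ring
    rw [e1] at h
    linarith

/-- `log n + 1/(2n) - H n` is antitone. -/
private lemma f_antitone {m n : ℕ} (hm : 1 ≤ m) (hmn : m ≤ n) :
    Real.log n + (2 * (n:ℝ))⁻¹ - H n ≤ Real.log m + (2 * (m:ℝ))⁻¹ - H m := by
  induction n, hmn using Nat.le_induction with
  | base => exact le_refl _
  | succ n hn ih =>
    refine le_trans ?_ ih
    have hn1 : (1:ℝ) ≤ (n:ℝ) := by exact_mod_cast hn.trans' hm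
    have hnpos : (0:ℝ) < n := by linarith
    have hy : (1:ℝ) ≤ ((n:ℝ) + 1) / n := by
      rw [le_div_iff₀ hnpos]; linarith
    have h := log_le_trap hy
    rw [Real.log_div (by linarith) (ne_of_gt hnpos)] at h
    have he : (((n:ℝ) + 1) / n - (((n:ℝ) + 1) / n)⁻¹) / 2
        = (2 * (n:ℝ))⁻¹ + (2 * ((n:ℝ) + 1))⁻¹ := by
      rw [inv_div]
      field_simp
      ring
    rw [he] at h
    rw [H_succ]
    push_cast
    have hpos : (0:ℝ) < (n:ℝ) + 1 := by linarith
    have hn0 : (n:ℝ) + 1 ≠ 0 := ne_of_gt hpos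
    have hi : (2 * ((n:ℝ) + 1))⁻¹ + (2 * ((n:ℝ) + 1))⁻¹ = ((n:ℝ) + 1)⁻¹ := by
      rw [← two_mul]
      rw [mul_inv]
      rw [← mul_assoc]
      norm_num
    linarith [hi]

/-- Numerical bound: `H 30 ≤ log 61 - log 2 + 0.5775`. -/
private lemma H30_bound : H 30 ≤ Real.log 61 - Real.log 2 + 0.5775 := by
  have hH : H 30 = 9304682830147 / 2329089562800 := by
    rw [H]
    norm_num [Finset.sum_Icc_succ_top]
  have hlog61 : Real.log 61 = 6 * Real.log 2 + Real.log (1 - 3/64) := by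
    have e : (61:ℝ) = 2^6 * (1 - 3/64) := by norm_num
    rw [e, Real.log_mul (by norm_num) (by norm_num), Real.log_pow]
    push_cast; ring
  have hseries := Real.abs_log_sub_add_sum_range_le (x := 3/64) (by rw [abs_of_nonneg (by norm_num : (0:ℝ) ≤ 3/64)]; norm_num) 4
  rw [abs_le] at hseries
  have h1 := hseries.1
  have hsum : ∑ i ∈ Finset.range 4, ((3:ℝ)/64) ^ (i+1) / (i+1)
      = 3/64 + (3/64)^2/2 + (3/64)^3/3 + (3/64)^4/4 := by
    rw [Finset.sum_range_succ, Finset.sum_range_succ, Finset.sum_range_succ,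
      Finset.sum_range_succ, Finset.sum_range_zero]
    norm_num
  have habs : |(3:ℝ)/64| = 3/64 := by norm_num
  rw [habs, hsum] at h1
  have hlog2 := Real.log_two_gt_d9
  rw [hlog61, hH]
  norm_num at h1 ⊢
  nlinarith [h1, hlog2]

/-- The key harmonic sum bound. -/
private lemma harmonic_bound {D : ℕ} (hD : 1 ≤ D) :
    H D ≤ Real.log D + 0.5775 + (2 * (D:ℝ))⁻¹ := by
  have key30 : H 30 ≤ Real.log 30 + (2 * (30:ℝ))⁻¹ + 0.5775 := by
    have h := H30_bound
    have h2 : Real.log 61 - Real.log 2 ≤ Real.log 30 + (60:ℝ)⁻¹ := by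
      have e1 : Real.log 61 - Real.log 2 = Real.log (61/2) := by
        rw [Real.log_div (by norm_num) (by norm_num)]
      have e2 : Real.log ((61:ℝ)/2) = Real.log 30 + Real.log (61/60) := by
        rw [← Real.log_mul (by norm_num) (by norm_num)]; norm_num
      have e3 := Real.log_le_sub_one_of_pos (x := (61:ℝ)/60) (by norm_num)
      rw [e1, e2]
      norm_num at e3 ⊢
      linarith
    norm_num at h2 ⊢
    linarith
  rcases le_or_gt D 30 with hle | hgt
  · have h := f_antitone hD hle
    have h30 : ((30:ℕ):ℝ) = (30:ℝ) := by norm_num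
    rw [h30] at h
    linarith
  · have h := g_antitone (m := 30) (by norm_num) (le_of_lt hgt)
    have hDpos : (0:ℝ) < (D:ℝ) := by
      have : 0 < D := by omega
      exact_mod_cast this
    have hlog : Real.log (2 * (D:ℝ) + 1) ≤ Real.log D + Real.log 2 + (2 * (D:ℝ))⁻¹ := by
      have e1 : Real.log (2 * (D:ℝ) + 1)
          = Real.log (2 * D) + Real.log ((2 * (D:ℝ) + 1) / (2 * D)) := by
        rw [← Real.log_mul (by positivity) (by positivity)]
        congr 1
        field_simp
      have e2 : Real.log (2 * (D:ℝ)) = Real.log 2 + Real.log D := by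
        rw [Real.log_mul (by norm_num) (ne_of_gt hDpos)]
      have e3 : Real.log ((2 * (D:ℝ) + 1) / (2 * D)) ≤ (2 * (D:ℝ))⁻¹ := by
        have h5 := Real.log_le_sub_one_of_pos (x := (2 * (D:ℝ) + 1) / (2 * D)) (by positivity)
        have e4 : (2 * (D:ℝ) + 1) / (2 * D) - 1 = (2 * (D:ℝ))⁻¹ := by
          field_simp
          ring
        rw [e4] at h5
        exact h5
      rw [e1, e2]
      linarith
    have h61 : (2 * ((30:ℕ):ℝ) + 1) = (61:ℝ) := by norm_num
    push_cast at h
    rw [show (2 * (30:ℝ) + 1) = (61:ℝ) by norm_num] at h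
    have hF := H30_bound
    linarith

/- ### Combinatorial lemmas -/

private lemma card_anti (n : ℕ) : n.divisorsAntidiagonal.card = n.divisors.card := by
  rw [← Nat.image_fst_divisorsAntidiagonal]
  rw [Finset.card_image_of_injOn]
  intro p hp' q hq' hpq
  have hp := Nat.mem_divisorsAntidiagonal.mp (Finset.mem_coe.mp hp')
  have hq := Nat.mem_divisorsAntidiagonal.mp (Finset.mem_coe.mp hq')
  have hne : p.1 ≠ 0 := by
    intro h; rw [h] at hp; simp at hp; exact hp.2 hp.1.symm
  have hfst : p.1 = q.1 := hpq
  have hmul : p.1 * p.2 = p.1 * q.2 := by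
    rw [hp.1, hfst]
    exact hq.1.symm
  have hsnd : p.2 = q.2 := by
    exact Nat.eq_of_mul_eq_mul_left (Nat.pos_of_ne_zero hne) hmul
  exact Prod.ext hfst hsnd

private lemma hyperbola (N : ℕ) (hN : 1 ≤ N) :
    ∑ n ∈ Icc 1 N, n.divisors.card + N.sqrt * N.sqrt
      ≤ 2 * ∑ a ∈ Icc 1 N.sqrt, N / a := by
  classical
  set D := N.sqrt with hD
  set T : Finset (ℕ × ℕ) := (Icc 1 N).biUnion (fun n => n.divisorsAntidiagonal) with hT
  have memT : ∀ p : ℕ × ℕ, p ∈ T ↔ 1 ≤ p.1 ∧ 1 ≤ p.2 ∧ p.1 * p.2 ≤ N := by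
    intro p
    simp only [hT, Finset.mem_biUnion, Nat.mem_divisorsAntidiagonal, mem_Icc]
    constructor
    · rintro ⟨n, ⟨hn1, hn2⟩, hmul, hne⟩
      have h1 : p.1 ≠ 0 := by rintro h; rw [h] at hmul; simp at hmul; omega
      have h2 : p.2 ≠ 0 := by rintro h; rw [h] at hmul; simp at hmul; omega
      omega
    · rintro ⟨h1, h2, h3⟩
      exact ⟨p.1 * p.2, ⟨Nat.one_le_iff_ne_zero.2 (by positivity), h3⟩, rfl, by positivity⟩
  have hsum : ∑ n ∈ Icc 1 N, n.divisors.card = T.card := by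
    rw [hT, Finset.card_biUnion]
    · exact Finset.sum_congr rfl fun n _ => (card_anti n).symm
    · intro a ha b hb hab
      simp only [Finset.disjoint_left]
      intro p hpa hpb
      rw [Nat.mem_divisorsAntidiagonal] at hpa hpb
      exact hab (hpa.1.symm.trans hpb.1)
  set A : Finset (ℕ × ℕ) := T.filter (fun p => p.1 ≤ D) with hA
  set B : Finset (ℕ × ℕ) := T.filter (fun p => p.2 ≤ D) with hB
  have hunion : A ∪ B = T := by
    rw [hA, hB, Finset.filter_union_right]
    apply Finset.filter_true_of_mem
    intro p hp
    rw [memT] at hp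
    by_contra hcon
    push_neg at hcon
    have h1 : D + 1 ≤ p.1 := hcon.1
    have h2 : D + 1 ≤ p.2 := hcon.2
    have h3 : (D + 1) * (D + 1) ≤ p.1 * p.2 := Nat.mul_le_mul h1 h2
    have hlt := Nat.lt_succ_sqrt N
    have : N < (D + 1) * (D + 1) := hlt
    omega
  have hinter : Icc 1 D ×ˢ Icc 1 D ⊆ A ∩ B := by
    intro p hp
    rw [Finset.mem_product, mem_Icc, mem_Icc] at hp
    have hmulN : p.1 * p.2 ≤ N := by
      calc p.1 * p.2 ≤ D * D := Nat.mul_le_mul hp.1.2 hp.2.2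
      _ ≤ N := Nat.sqrt_le N
    have hpT : p ∈ T := (memT p).2 ⟨hp.1.1, hp.2.1, hmulN⟩
    rw [Finset.mem_inter, hA, hB, Finset.mem_filter, Finset.mem_filter]
    exact ⟨⟨hpT, hp.1.2⟩, ⟨hpT, hp.2.2⟩⟩
  have cardA : A.card = ∑ a ∈ Icc 1 D, N / a := by
    have hAe : A = (Icc 1 D).biUnion (fun a => {a} ×ˢ Icc 1 (N / a)) := by
      ext p
      rw [hA, Finset.mem_filter, memT, Finset.mem_biUnion]
      constructor
      · rintro ⟨⟨h1, h2, h3⟩, h4⟩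
        refine ⟨p.1, mem_Icc.2 ⟨h1, h4⟩, ?_⟩
        rw [Finset.mem_product, Finset.mem_singleton, mem_Icc]
        exact ⟨rfl, h2, (Nat.le_div_iff_mul_le (by omega)).2 (by rw [Nat.mul_comm]; exact h3)⟩
      · rintro ⟨a, ha, hp⟩
        rw [Finset.mem_product, Finset.mem_singleton, mem_Icc] at hp
        rw [mem_Icc] at ha
        obtain ⟨hfst, hb1, hb2⟩ := hp
        subst hfst
        have h5 := (Nat.le_div_iff_mul_le (k := p.1) (by omega)).1 hb2
        rw [Nat.mul_comm] at h5
        exact ⟨⟨ha.1, hb1, h5⟩, ha.2⟩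
    rw [hAe, Finset.card_biUnion]
    · apply Finset.sum_congr rfl
      intro a ha
      rw [Finset.card_product, Finset.card_singleton, Nat.card_Icc]
      simp
    · intro a ha b hb hab
      simp only [Finset.disjoint_left]
      intro p hpa hpb
      rw [Finset.mem_product, Finset.mem_singleton] at hpa hpb
      exact hab (hpa.1.symm.trans hpb.1)
  have cardB : B.card = A.card := by
    have hBe : B = A.image Prod.swap := by
      ext p
      rw [Finset.mem_image]
      constructor
      · intro hp
        rw [hB, Finset.mem_filter, memT] at hp
        refine ⟨p.swap, ?_, Prod.swap_swap p⟩
        rw [hA, Finset.mem_filter, memT]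
        simp only [Prod.fst_swap, Prod.snd_swap]
        exact ⟨⟨hp.1.2.1, hp.1.1, by rw [Nat.mul_comm]; exact hp.1.2.2⟩, hp.2⟩
      · rintro ⟨q, hq, rfl⟩
        rw [hA, Finset.mem_filter, memT] at hq
        rw [hB, Finset.mem_filter, memT]
        simp only [Prod.fst_swap, Prod.snd_swap]
        exact ⟨⟨hq.1.2.1, hq.1.1, by rw [Nat.mul_comm]; exact hq.1.2.2⟩, hq.2⟩
    rw [hBe, Finset.card_image_of_injective _ Prod.swap_injective]
  have hcards : T.card + (A ∩ B).card = A.card + B.card := by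
    rw [← hunion]
    exact Finset.card_union_add_card_inter A B
  have hDD : D * D ≤ (A ∩ B).card := by
    calc D * D = (Icc 1 D ×ˢ Icc 1 D).card := by
          simp [Finset.card_product, Nat.card_Icc]
    _ ≤ (A ∩ B).card := Finset.card_le_card hinter
  calc ∑ n ∈ Icc 1 N, n.divisors.card + D * D
      ≤ T.card + (A ∩ B).card := by rw [hsum]; exact Nat.add_le_add_left hDD _
    _ = A.card + B.card := hcards
    _ = 2 * ∑ a ∈ Icc 1 D, N / a := by rw [cardB, cardA]; ring

/- ### Main theorem -/

set_option maxHeartbeats 1000000 in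
theorem divisor_sum_bound (x : ℝ) (hx : 1 ≤ x) :
    ∑ n ∈ Finset.Icc 1 ⌊x⌋₊, (n.divisors.card : ℝ)
      ≤ x * Real.log x + 0.155 * x + 4 * Real.sqrt x := by
  set N := ⌊x⌋₊ with hNdef
  have hN : 1 ≤ N := by
    rw [hNdef]
    exact Nat.le_floor (by exact_mod_cast hx)
  set D := N.sqrt with hDdef
  have hD : 1 ≤ D := by
    have : 1 * 1 ≤ N := by omega
    rw [hDdef]
    exact (Nat.le_sqrt.2 (by omega))
  have hxpos : (0:ℝ) < x := by linarith
  have hNx : (N : ℝ) ≤ x := Nat.floor_le (le_of_lt hxpos)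
  have hxN : x < N + 1 := Nat.lt_floor_add_one x
  have hsq : Real.sqrt x * Real.sqrt x = x := Real.mul_self_sqrt (le_of_lt hxpos)
  have hsq1 : 1 ≤ Real.sqrt x := by
    have := Real.sqrt_le_sqrt hx
    simpa using this
  have hDpos : (0:ℝ) < (D:ℝ) := by exact_mod_cast hD
  -- D ≤ √x
  have hDsqrt : (D : ℝ) ≤ Real.sqrt x := by
    have h1 : ((D:ℝ)) * D ≤ (N : ℝ) := by
      have := Nat.sqrt_le N
      exact_mod_cast this
    nlinarith [Real.sqrt_nonneg x]
  -- √x ≤ D + 1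
  have hsqrtD : Real.sqrt x ≤ (D : ℝ) + 1 := by
    have h1 : (N:ℕ) + 1 ≤ (D + 1) * (D + 1) := Nat.lt_succ_sqrt N
    have h2 : x ≤ ((D:ℝ) + 1) * ((D:ℝ) + 1) := by
      have : ((N:ℝ)) + 1 ≤ ((D:ℝ) + 1) * ((D:ℝ) + 1) := by exact_mod_cast h1
      linarith
    nlinarith [Real.sqrt_nonneg x]
  -- cast the hyperbola inequality
  have hnat := hyperbola N hN
  have hcast : ∑ n ∈ Icc 1 N, (n.divisors.card : ℝ) + (D:ℝ) * D
      ≤ 2 * ∑ a ∈ Icc 1 D, ((N / a : ℕ) : ℝ) := by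
    exact_mod_cast hnat
  -- (N/a : ℕ) ≤ x * a⁻¹
  have hdiv : ∑ a ∈ Icc 1 D, ((N / a : ℕ) : ℝ) ≤ x * H D := by
    rw [H, Finset.mul_sum]
    apply Finset.sum_le_sum
    intro a ha
    rw [mem_Icc] at ha
    have hapos : (0:ℝ) < (a:ℝ) := by exact_mod_cast ha.1
    calc ((N / a : ℕ) : ℝ) ≤ (N : ℝ) / a := Nat.cast_div_le
      _ ≤ x / a := by gcongr
      _ = x * (a:ℝ)⁻¹ := by rw [div_eq_mul_inv]
  -- harmonic bound
  have hharm := harmonic_bound hD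
  -- log D ≤ log x / 2
  have hlogD : Real.log D ≤ Real.log x / 2 := by
    have h1 : Real.log (D:ℝ) ≤ Real.log (Real.sqrt x) := by
      apply Real.log_le_log hDpos hDsqrt
    rw [Real.log_sqrt (le_of_lt hxpos)] at h1
    exact h1
  -- x / D ≤ 2 √x
  have hD1 : (1:ℝ) ≤ (D:ℝ) := by exact_mod_cast hD
  have hxD : x * (D:ℝ)⁻¹ ≤ 2 * Real.sqrt x := by
    rw [← div_eq_mul_inv, div_le_iff₀ hDpos]
    rcases le_or_gt (Real.sqrt x) 2 with hs | hs
    · nlinarith [Real.sqrt_nonneg x]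
    · nlinarith [Real.sqrt_nonneg x]
  have hDD2 : x - 2 * Real.sqrt x ≤ (D:ℝ) * D := by
    nlinarith [Real.sqrt_nonneg x]
  -- combine everything
  have hm : 2 * x * H D ≤ 2 * x * Real.log D + 1.155 * x + x * (D:ℝ)⁻¹ := by
    have h1 := mul_le_mul_of_nonneg_left hharm (show (0:ℝ) ≤ 2 * x by linarith)
    have e : 2 * x * (2 * (D:ℝ))⁻¹ = x * (D:ℝ)⁻¹ := by
      have : (D:ℝ) ≠ 0 := ne_of_gt hDpos
      field_simp
    nlinarith [h1, e]
  have hxlog : 2 * x * Real.log D ≤ x * Real.log x := by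
    have := mul_le_mul_of_nonneg_left hlogD (show (0:ℝ) ≤ 2 * x by linarith)
    linarith
  have hfin : ∑ n ∈ Icc 1 N, (n.divisors.card : ℝ)
      ≤ 2 * x * H D - (D:ℝ) * D := by
    have h2 : 2 * ∑ a ∈ Icc 1 D, ((N / a : ℕ) : ℝ) ≤ 2 * (x * H D) := by linarith [hdiv]
    linarith [hcast, h2]
  have : (0.155 : ℝ) = 1.155 - 1 := by norm_num
  linarith [hfin, hm, hxlog, hxD, hDD2]
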